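/- Let φ = (1+√5)/2 and β = arccos((3φ−1)/4). Then β is not a rational multiple of π. -/
import Mathlib

private def dd : ℕ → ℤ
  | 0 => 2
  | 1 => 11
  | (n+2) => 11 * dd (n+1) - 64 * dd n

private lemma dd_odd : ∀ n, Odd (dd (n+1)) := by
  intro n
  induction n with
  | zero => exact ⟨5, rfl⟩
  | succ m ih =>
    obtain ⟨k, hk⟩ := ih
    exact ⟨11 * k + 5 - 32 * dd m, by simp only [dd]; omega⟩

private lemma dd_cos (θ : ℝ) (hθ : Real.cos θ = 11/16) :
    ∀ n : ℕ, (dd n : ℝ) = 2 * 8 ^ n * Real.cos (n * θ) := by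
  have key : ∀ n : ℕ, (dd n : ℝ) = 2 * 8 ^ n * Real.cos (n * θ) ∧
      (dd (n+1) : ℝ) = 2 * 8 ^ (n+1) * Real.cos ((n+1) * θ) := by
    intro n
    induction n with
    | zero => norm_num [dd, hθ]
    | succ m ih =>
      obtain ⟨ih1, ih2⟩ := ih
      push_cast at ih1 ih2 ⊢
      refine ⟨ih2, ?_⟩
      have hadd : Real.cos (((m:ℝ) + 1 + 1) * θ) =
          2 * Real.cos (((m:ℝ) + 1) * θ) * Real.cos θ - Real.cos ((m:ℝ) * θ) := by
        rw [show ((m:ℝ) + 1 + 1) * θ = ((m:ℝ)+1) * θ + θ by ring,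
            show ((m:ℝ)) * θ = ((m:ℝ)+1) * θ - θ by ring, Real.cos_add, Real.cos_sub]
        ring
      have hrec : (dd (m+2) : ℝ) = 11 * (dd (m+1) : ℝ) - 64 * (dd m : ℝ) := by
        simp [dd]
      push_cast at hrec
      rw [hrec, ih1, ih2, hadd, hθ]
      ring
  exact fun n => (key n).1

theorem stmt18 (φ β : ℝ) (hφ : φ = (1 + Real.sqrt 5) / 2)
    (hβ : β = Real.arccos ((3 * φ - 1) / 4)) :
    ¬ ∃ q : ℚ, β = (q : ℝ) * Real.pi := by
  have hs5 : Real.sqrt 5 ^ 2 = 5 := Real.sq_sqrt (by norm_num)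
  have hs5nn : (0:ℝ) ≤ Real.sqrt 5 := Real.sqrt_nonneg 5
  have hval : (3 * φ - 1) / 4 = (1 + 3 * Real.sqrt 5) / 8 := by rw [hφ]; ring
  have hcosβ : Real.cos β = (1 + 3 * Real.sqrt 5) / 8 := by
    rw [hβ, hval, Real.cos_arccos]
    · nlinarith
    · nlinarith
  have hcos3 : Real.cos (3 * β) = 11 / 16 := by
    rw [Real.cos_three_mul, hcosβ]
    linear_combination (27 * (Real.sqrt 5 + 1) / 128) * hs5
  rintro ⟨q, hq⟩
  set N : ℕ := 2 * q.den with hN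
  have hNθ : ((N : ℕ) : ℝ) * (3 * β) = (3 * q.num : ℤ) * (2 * Real.pi) := by
    rw [hq]
    have : ((q.den : ℝ)) * (q : ℝ) = (q.num : ℝ) := by
      rw [mul_comm]
      exact_mod_cast Rat.mul_den_eq_num q
    push_cast [hN]
    linear_combination (6 * Real.pi) * this
  have hcosN : Real.cos (((N : ℕ) : ℝ) * (3 * β)) = 1 := by
    rw [hNθ, Real.cos_int_mul_two_pi]
  have hd := dd_cos (3 * β) hcos3 N
  rw [hcosN, mul_one] at hd
  have hNpos : 1 ≤ N := by
    have := q.den_pos; omega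
  have hodd : Odd (dd N) := by
    obtain ⟨m, hm⟩ := Nat.exists_eq_add_of_le hNpos
    rw [hm, add_comm]; exact dd_odd m
  have heven : Even (dd N) := by
    have : (dd N : ℝ) = ((2 * 8 ^ N : ℤ) : ℝ) := by rw [hd]; push_cast; ring
    have h2 : dd N = 2 * 8 ^ N := by exact_mod_cast this
    exact ⟨8 ^ N, by omega⟩
  exact (Int.not_odd_iff_even.mpr heven) hodd
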